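/- (Lemma 2). For every kernel g of ℓ dimensions, ∏_{i=0}^{ℓ−1} D_g(i) ≤ ∏_{i=0}^{ℓ−1} d(ℓ, ℓ−i); equivalently, E(g) ≤ (1/ℓ) Σ_{i=0}^{ℓ−1} log_ℓ d(ℓ, ℓ−i). -/

import Mathlib

/-- The `i`-th partial distance of a kernel `g` of `ℓ` dimensions:
`D_g(i) = min { d_H(g(w•0•u), g(w•1•v)) : w ∈ {0,1}^i, u, v ∈ {0,1}^{ℓ−1−i} }`,
phrased via pairs of inputs that agree on coordinates `< i` and differ as `0`/`1`
at coordinate `i`. -/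
noncomputable def partialDist {ℓ : ℕ} (g : (Fin ℓ → ZMod 2) → (Fin ℓ → ZMod 2)) (i : ℕ) : ℕ :=
  sInf { d | ∃ x y : Fin ℓ → ZMod 2,
    (∀ j : Fin ℓ, (j : ℕ) < i → x j = y j) ∧
    (∀ j : Fin ℓ, (j : ℕ) = i → x j = 0 ∧ y j = 1) ∧
    d = hammingDist (g x) (g y) }

/-- `d(n,k)`: the largest `d` such that there is a binary code of length `n` and size `2^k`
all of whose pairs of distinct codewords are at Hamming distance at least `d`. -/
noncomputable def maxMinDist (n k : ℕ) : ℕ :=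
  sSup { d | ∃ C : Finset (Fin n → ZMod 2), C.card = 2 ^ k ∧
    ∀ c0 ∈ C, ∀ c1 ∈ C, c0 ≠ c1 → d ≤ hammingDist c0 c1 }

private lemma zmod2_cases : ∀ z : ZMod 2, z = 0 ∨ z = 1 := by decide

/-- If `x ≠ y` and they agree outside `T'`, then the Hamming distance of their images is at
least the partial distance at the first coordinate where they differ (which lies in `T'`). -/
private lemma exists_partialDist_le {ℓ : ℕ} (g : (Fin ℓ → ZMod 2) → (Fin ℓ → ZMod 2))
    (T' : Finset (Fin ℓ)) (x y : Fin ℓ → ZMod 2) (hxy : x ≠ y)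
    (hagree : ∀ j, j ∉ T' → x j = y j) :
    ∃ j ∈ T', partialDist g (j : ℕ) ≤ hammingDist (g x) (g y) := by
  classical
  set D : Finset (Fin ℓ) := Finset.univ.filter (fun j : Fin ℓ => x j ≠ y j) with hD
  have hDne : D.Nonempty := by
    rcases Function.ne_iff.mp hxy with ⟨j, hj⟩
    exact ⟨j, by simp [hD, hj]⟩
  set j0 : Fin ℓ := D.min' hDne with hj0def
  have hj0D : j0 ∈ D := D.min'_mem hDne
  have hx0y0 : x j0 ≠ y j0 := by
    have := Finset.mem_filter.mp hj0D
    exact this.2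
  have hj0T' : j0 ∈ T' := by
    by_contra h
    exact hx0y0 (hagree _ h)
  have hlt : ∀ j : Fin ℓ, (j : ℕ) < (j0 : ℕ) → x j = y j := by
    intro j hj
    by_contra hne
    have hjD : j ∈ D := Finset.mem_filter.mpr ⟨Finset.mem_univ _, hne⟩
    have : j0 ≤ j := D.min'_le j hjD
    exact absurd hj (not_lt.mpr this)
  rcases zmod2_cases (x j0) with hx0 | hx0
  · -- x j0 = 0, so y j0 = 1
    have hy0 : y j0 = 1 := by
      rcases zmod2_cases (y j0) with h | h
      · exact absurd (hx0.trans h.symm) hx0y0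
      · exact h
    refine ⟨j0, hj0T', Nat.sInf_le ⟨x, y, hlt, ?_, rfl⟩⟩
    intro j hj
    have : j = j0 := Fin.ext hj
    rw [this]
    exact ⟨hx0, hy0⟩
  · -- x j0 = 1, so y j0 = 0; use the pair (y, x)
    have hy0 : y j0 = 0 := by
      rcases zmod2_cases (y j0) with h | h
      · exact h
      · exact absurd (hx0.trans h.symm) hx0y0
    have hle : partialDist g (j0 : ℕ) ≤ hammingDist (g y) (g x) := by
      refine Nat.sInf_le ⟨y, x, fun j hj => (hlt j hj).symm, ?_, rfl⟩
      intro j hj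
      have : j = j0 := Fin.ext hj
      rw [this]
      exact ⟨hy0, hx0⟩
    rw [hammingDist_comm] at hle
    exact ⟨j0, hj0T', hle⟩

/-- Key step: any common lower bound of the partial distances on a set `T` of coordinates
is at most `maxMinDist ℓ T.card`. -/
private lemma le_maxMinDist_of_forall {ℓ : ℕ}
    (g : (Fin ℓ → ZMod 2) → (Fin ℓ → ZMod 2)) (hg : Function.Bijective g)
    (T : Finset ℕ) (hT : T ⊆ Finset.range ℓ) (hne : T.Nonempty)
    (m : ℕ) (hm : ∀ j ∈ T, m ≤ partialDist g j) :
    m ≤ maxMinDist ℓ T.card := by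
  classical
  have hTlt : ∀ a ∈ T, a < ℓ := fun a ha => Finset.mem_range.mp (hT ha)
  set T' : Finset (Fin ℓ) := T.attachFin hTlt with hT'def
  have hcardT' : T'.card = T.card := Finset.card_attachFin T hTlt
  have hmemT' : ∀ j : Fin ℓ, j ∈ T' ↔ (j : ℕ) ∈ T := fun j => Finset.mem_attachFin hTlt
  -- the extension-by-zero map
  set ext : ({j // j ∈ T'} → ZMod 2) → (Fin ℓ → ZMod 2) :=
    fun u j => if h : j ∈ T' then u ⟨j, h⟩ else 0 with hextdef
  have hextinj : Function.Injective ext := by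
    intro u v h
    funext ⟨j, hj⟩
    have := congrFun h j
    simpa [hextdef, hj] using this
  have hext_out : ∀ (u : {j // j ∈ T'} → ZMod 2) (j : Fin ℓ), j ∉ T' → ext u j = 0 := by
    intro u j hj
    simp [hextdef, hj]
  set C : Finset (Fin ℓ → ZMod 2) := Finset.image (fun u => g (ext u)) Finset.univ with hCdef
  have hCcard : C.card = 2 ^ T.card := by
    have hinj : Function.Injective (fun u => g (ext u)) := hg.1.comp hextinj
    rw [hCdef, Finset.card_image_of_injective _ hinj, Finset.card_univ,
      Fintype.card_fun, ZMod.card, Fintype.card_coe, hcardT']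
  have hCmin : ∀ c0 ∈ C, ∀ c1 ∈ C, c0 ≠ c1 → m ≤ hammingDist c0 c1 := by
    intro c0 hc0 c1 hc1 hne'
    rcases Finset.mem_image.mp hc0 with ⟨u, -, hu⟩
    rcases Finset.mem_image.mp hc1 with ⟨v, -, hv⟩
    have hxy : ext u ≠ ext v := by
      intro h
      apply hne'
      rw [← hu, ← hv, h]
    have hagree : ∀ j, j ∉ T' → ext u j = ext v j := by
      intro j hj
      rw [hext_out u j hj, hext_out v j hj]
    obtain ⟨j, hjT', hle⟩ := exists_partialDist_le g T' (ext u) (ext v) hxy hagree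
    have hmj : m ≤ partialDist g (j : ℕ) := hm _ ((hmemT' j).mp hjT')
    calc m ≤ partialDist g (j : ℕ) := hmj
      _ ≤ hammingDist (g (ext u)) (g (ext v)) := hle
      _ = hammingDist c0 c1 := by rw [hu, hv]
  have hmem : m ∈ { d | ∃ C : Finset (Fin ℓ → ZMod 2), C.card = 2 ^ T.card ∧
      ∀ c0 ∈ C, ∀ c1 ∈ C, c0 ≠ c1 → d ≤ hammingDist c0 c1 } := ⟨C, hCcard, hCmin⟩
  have hbdd : BddAbove { d | ∃ C : Finset (Fin ℓ → ZMod 2), C.card = 2 ^ T.card ∧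
      ∀ c0 ∈ C, ∀ c1 ∈ C, c0 ≠ c1 → d ≤ hammingDist c0 c1 } := by
    refine ⟨ℓ, ?_⟩
    rintro d ⟨C', hC'card, hC'min⟩
    have hTpos : 0 < T.card := Finset.card_pos.mpr hne
    have h2 : 1 < C'.card := by
      rw [hC'card]
      calc 1 < 2 ^ 1 := by norm_num
        _ ≤ 2 ^ T.card := Nat.pow_le_pow_right (by norm_num) hTpos
    obtain ⟨a, ha, b, hb, hab⟩ := Finset.one_lt_card.mp h2
    calc d ≤ hammingDist a b := hC'min a ha b hb hab
      _ ≤ Fintype.card (Fin ℓ) := hammingDist_le_card_fintype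
      _ = ℓ := Fintype.card_fin ℓ
  exact le_csSup hbdd hmem

private lemma prod_aux {ℓ : ℕ}
    (g : (Fin ℓ → ZMod 2) → (Fin ℓ → ZMod 2)) (hg : Function.Bijective g) :
    ∀ n (T : Finset ℕ), T.card = n → T ⊆ Finset.range ℓ →
      ∏ j ∈ T, partialDist g j ≤ ∏ i ∈ Finset.range n, maxMinDist ℓ (i + 1) := by
  intro n
  induction n with
  | zero =>
    intro T hc _
    rw [Finset.card_eq_zero.mp hc]
    simp
  | succ n ih =>
    intro T hc hT
    have hne : T.Nonempty := Finset.card_pos.mp (by omega)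
    obtain ⟨j0, hj0, hmin⟩ := Finset.exists_min_image T (partialDist g) hne
    have h1 : partialDist g j0 ≤ maxMinDist ℓ (n + 1) := by
      have := le_maxMinDist_of_forall g hg T hT hne (partialDist g j0) hmin
      rwa [hc] at this
    have h2 : ∏ j ∈ T.erase j0, partialDist g j ≤ ∏ i ∈ Finset.range n, maxMinDist ℓ (i + 1) := by
      refine ih (T.erase j0) ?_ (fun x hx => hT (Finset.mem_of_mem_erase hx))
      rw [Finset.card_erase_of_mem hj0, hc]
      omega
    calc ∏ j ∈ T, partialDist g j
        = partialDist g j0 * ∏ j ∈ T.erase j0, partialDist g j :=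
          (Finset.mul_prod_erase T _ hj0).symm
      _ ≤ maxMinDist ℓ (n + 1) * ∏ i ∈ Finset.range n, maxMinDist ℓ (i + 1) :=
          Nat.mul_le_mul h1 h2
      _ = ∏ i ∈ Finset.range (n + 1), maxMinDist ℓ (i + 1) := by
          rw [Finset.prod_range_succ]; ring

theorem prod_partialDist_le_prod_maxMinDist {ℓ : ℕ}
    (g : (Fin ℓ → ZMod 2) → (Fin ℓ → ZMod 2)) (hg : Function.Bijective g) :
    ∏ i ∈ Finset.range ℓ, partialDist g i ≤ ∏ i ∈ Finset.range ℓ, maxMinDist ℓ (ℓ - i) := by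
  have h1 := prod_aux g hg ℓ (Finset.range ℓ) (Finset.card_range ℓ) (subset_refl _)
  have h2 : ∏ i ∈ Finset.range ℓ, maxMinDist ℓ (i + 1)
      = ∏ i ∈ Finset.range ℓ, maxMinDist ℓ (ℓ - i) := by
    rw [← Finset.prod_range_reflect (fun i => maxMinDist ℓ (i + 1)) ℓ]
    refine Finset.prod_congr rfl ?_
    intro i hi
    have hi' : i < ℓ := Finset.mem_range.mp hi
    have : ℓ - 1 - i + 1 = ℓ - i := by omega
    simp only [this]
  rw [← h2]
  exact h1
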